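/- L(/→, \→)-grammars with types restricted to degree at most 1 recognise exactly the ε-free linear context-free languages. -/

import Mathlib

/-- Types over primitives `P` with `/` and `\`. `div β α` is `β/α`; `bsl α β` is `α\β`. -/
inductive Tp2 (P : Type) : Type
  | pr : P → Tp2 P
  | div : Tp2 P → Tp2 P → Tp2 P
  | bsl : Tp2 P → Tp2 P → Tp2 P

open Tp2

/-- The calculus L(/→, \→) with Cut. -/
inductive Der2 {P : Type} : List (Tp2 P) → Tp2 P → Prop
  | ax (α : Tp2 P) : Der2 [α] α
  | slash {Γ Δ Θ : List (Tp2 P)} {α β γ : Tp2 P} :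
      Der2 Γ α → Der2 (Δ ++ β :: Θ) γ → Der2 (Δ ++ div β α :: (Γ ++ Θ)) γ
  | bslash {Γ Δ Θ : List (Tp2 P)} {α β γ : Tp2 P} :
      Der2 Γ α → Der2 (Δ ++ β :: Θ) γ → Der2 (Δ ++ (Γ ++ bsl α β :: Θ)) γ
  | cut {Γ Θ Δ : List (Tp2 P)} {α β : Tp2 P} :
      Der2 (Γ ++ α :: Θ) β → Der2 Δ α → Der2 (Γ ++ (Δ ++ Θ)) β

/-- Cut-free L(/→, \→). -/
inductive DerCF2 {P : Type} : List (Tp2 P) → Tp2 P → Prop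
  | ax (α : Tp2 P) : DerCF2 [α] α
  | slash {Γ Δ Θ : List (Tp2 P)} {α β γ : Tp2 P} :
      DerCF2 Γ α → DerCF2 (Δ ++ β :: Θ) γ → DerCF2 (Δ ++ div β α :: (Γ ++ Θ)) γ
  | bslash {Γ Δ Θ : List (Tp2 P)} {α β γ : Tp2 P} :
      DerCF2 Γ α → DerCF2 (Δ ++ β :: Θ) γ → DerCF2 (Δ ++ (Γ ++ bsl α β :: Θ)) γ

/-- Degree: number of occurrences of connectives. -/
def deg2 {P : Type} : Tp2 P → ℕ
  | pr _ => 0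
  | div a b => deg2 a + deg2 b + 1
  | bsl a b => deg2 a + deg2 b + 1

/-- A Lambek grammar over types with `/` and `\`. -/
structure LGrammar2 (P V : Type) where
  S : P
  f : V → Set (Tp2 P)
  fin : ∀ a : V, (f a).Finite

/-- The language recognised by an L(/→, \→)-grammar. -/
def LGrammar2.Lang {P V : Type} (G : LGrammar2 P V) : Set (List V) :=
  {w | ∃ Γ : List (Tp2 P), List.Forall₂ (fun a α => α ∈ G.f a) w Γ ∧ Der2 Γ (pr G.S)}

/-- A linear context-free grammar: productions `A → aB`, `A → Ba`, `A → a`. -/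
structure LinGrammar (N T : Type) where
  S : N
  rule_r : N → T → N → Prop
  rule_l : N → N → T → Prop
  term : N → T → Prop

/-- Generation relation of a linear context-free grammar. -/
inductive LinGen {N T : Type} (G : LinGrammar N T) : N → List T → Prop
  | term {A : N} {a : T} : G.term A a → LinGen G A [a]
  | right {A B : N} {a : T} {w : List T} : G.rule_r A a B → LinGen G B w → LinGen G A (a :: w)
  | left {A B : N} {a : T} {w : List T} : G.rule_l A B a → LinGen G B w → LinGen G A (w ++ [a])

/-- The language generated by a linear context-free grammar. -/
def LinGrammar.Lang {N T : Type} (G : LinGrammar N T) : Set (List T) :=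
  {w | LinGen G G.S w}

section Core
variable {P : Type}

theorem cutAdm {Δ : List (Tp2 P)} {α : Tp2 P} (h : DerCF2 Δ α) :
    ∀ Γ Θ (β : Tp2 P), DerCF2 (Γ ++ α :: Θ) β → DerCF2 (Γ ++ (Δ ++ Θ)) β := by
  induction h with
  | ax a => intro Γ Θ β h; simpa using h
  | @slash Γ' Δ' Θ' α' β' γ' d1 d2 ih1 ih2 =>
    intro Γ Θ β h
    have h2 := ih2 Γ Θ β h
    have h3 : DerCF2 ((Γ ++ Δ') ++ β' :: (Θ' ++ Θ)) β := by
      simpa [List.append_assoc] using h2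
    have h4 := DerCF2.slash d1 h3
    simpa [List.append_assoc] using h4
  | @bslash Γ' Δ' Θ' α' β' γ' d1 d2 ih1 ih2 =>
    intro Γ Θ β h
    have h2 := ih2 Γ Θ β h
    have h3 : DerCF2 ((Γ ++ Δ') ++ β' :: (Θ' ++ Θ)) β := by
      simpa [List.append_assoc] using h2
    have h4 := DerCF2.bslash d1 h3
    simpa [List.append_assoc] using h4

theorem der_to_cf {Γ : List (Tp2 P)} {γ : Tp2 P} (h : Der2 Γ γ) : DerCF2 Γ γ := by
  induction h with
  | ax a => exact DerCF2.ax a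
  | slash _ _ ih1 ih2 => exact DerCF2.slash ih1 ih2
  | bslash _ _ ih1 ih2 => exact DerCF2.bslash ih1 ih2
  | cut _ _ ih1 ih2 => exact cutAdm ih2 _ _ _ ih1

theorem deg_zero {t : Tp2 P} (h : deg2 t = 0) : ∃ q, t = pr q := by
  cases t with
  | pr q => exact ⟨q, rfl⟩
  | div a b => simp [deg2] at h
  | bsl a b => simp [deg2] at h

/-- the reduction relation for degree ≤ 1 sequents -/
inductive Red' : List (Tp2 P) → P → List (Tp2 P) → P → Prop
  | base (c : P) : Red' [] c [] c
  | left {L : List (Tp2 P)} {c : P} {R : List (Tp2 P)} {p p' : P} :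
      Red' L c R p' → Red' (div (pr p) (pr p') :: L) c R p
  | right {L : List (Tp2 P)} {c : P} {R : List (Tp2 P)} {p p' : P} :
      Red' L c R p' → Red' L c (R ++ [bsl (pr p') (pr p)]) p

theorem Red'.compL {L₂ : List (Tp2 P)} {b : P} {R₂ : List (Tp2 P)} {p : P}
    (h2 : Red' L₂ b R₂ p) {L₁ : List (Tp2 P)} {c a : P} {R₁ : List (Tp2 P)}
    (h1 : Red' L₁ c R₁ a) :
    Red' (L₂ ++ div (pr b) (pr a) :: L₁) c (R₁ ++ R₂) p := by
  induction h2 with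
  | base _ => simpa using Red'.left h1
  | left h ih => exact Red'.left ih
  | right h ih =>
    rw [← List.append_assoc]
    exact Red'.right ih

theorem Red'.compR {L₂ : List (Tp2 P)} {b : P} {R₂ : List (Tp2 P)} {p : P}
    (h2 : Red' L₂ b R₂ p) {L₁ : List (Tp2 P)} {c a : P} {R₁ : List (Tp2 P)}
    (h1 : Red' L₁ c R₁ a) :
    Red' (L₂ ++ L₁) c (R₁ ++ bsl (pr a) (pr b) :: R₂) p := by
  induction h2 with
  | base _ => simpa using Red'.right h1
  | left h ih => exact Red'.left ih
  | @right Lx cx Rx px px' h ih =>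
    have h5 := Red'.right (p := px) ih
    simpa [List.append_assoc] using h5

theorem listAlign {T : Type} (spec : T → Prop) :
    ∀ (L Δ : List T) (x y : T) (R Θ : List T), L ++ x :: R = Δ ++ y :: Θ →
      (∀ t ∈ L, ¬ spec t) → (∀ t ∈ R, ¬ spec t) → spec y →
      L = Δ ∧ x = y ∧ R = Θ := by
  intro L
  induction L with
  | nil =>
    intro Δ x y R Θ heq hL hR hy
    cases Δ with
    | nil =>
      simp only [List.nil_append] at heq
      exact ⟨rfl, by injection heq, by injection heq⟩
    | cons d Δ' =>
      simp only [List.nil_append, List.cons_append] at heq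
      obtain ⟨h1, h2⟩ : x = d ∧ R = Δ' ++ y :: Θ := by
        constructor <;> injection heq
      exact absurd hy (hR y (h2 ▸ List.mem_append_right _ (List.mem_cons_self)))
  | cons l L' ih =>
    intro Δ x y R Θ heq hL hR hy
    cases Δ with
    | nil =>
      simp only [List.cons_append, List.nil_append] at heq
      have h1 : l = y := by injection heq
      exact absurd hy (h1 ▸ hL l (List.mem_cons_self))
    | cons d Δ' =>
      simp only [List.cons_append] at heq
      have h1 : l = d := by injection heq
      have h2 : L' ++ x :: R = Δ' ++ y :: Θ := by injection heq
      obtain ⟨e1, e2, e3⟩ := ih Δ' x y R Θ h2 (fun t ht => hL t (List.mem_cons_of_mem _ ht)) hR hy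
      exact ⟨by rw [h1, e1], e2, e3⟩

theorem structure_lemma {Γ : List (Tp2 P)} {γ : Tp2 P} (h : DerCF2 Γ γ) :
    ∀ p : P, γ = pr p → (∀ t ∈ Γ, deg2 t ≤ 1) →
    ∃ (L : List (Tp2 P)) (c : P) (R : List (Tp2 P)), Γ = L ++ pr c :: R ∧
      (∀ t ∈ L, ∀ q, t ≠ pr q) ∧ (∀ t ∈ R, ∀ q, t ≠ pr q) ∧ Red' L c R p := by
  induction h with
  | ax a =>
    intro p hp hdeg
    subst hp
    exact ⟨[], p, [], rfl, by simp, by simp, Red'.base p⟩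
  | @slash Γ' Δ Θ α β γ d1 d2 ih1 ih2 =>
    intro p hp hdeg
    subst hp
    have hdiv : deg2 (div β α) ≤ 1 := hdeg _ (by simp)
    have hβ0 : deg2 β = 0 := by simp [deg2] at hdiv; omega
    have hα0 : deg2 α = 0 := by simp [deg2] at hdiv; omega
    obtain ⟨b, rfl⟩ := deg_zero hβ0
    obtain ⟨a, rfl⟩ := deg_zero hα0
    obtain ⟨L₁, c, R₁, hΓ', hL₁, hR₁, hred1⟩ := ih1 a rfl
      (fun t ht => hdeg t (by simp [ht]))
    obtain ⟨L₂, c₂, R₂, hΓ₂, hL₂, hR₂, hred2⟩ := ih2 p rfl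
      (by
        intro t ht
        rcases List.mem_append.1 ht with h' | h'
        · exact hdeg t (by simp [h'])
        · rcases List.mem_cons.1 h' with rfl | h''
          · simp [deg2]
          · exact hdeg t (by simp [h'']))
    obtain ⟨e1, e2, e3⟩ := listAlign (fun t => ∃ q, t = pr q) L₂ Δ (pr c₂) (pr b) R₂ Θ hΓ₂.symm
      (fun t ht hq => hq.elim (fun q hq => hL₂ t ht q hq))
      (fun t ht hq => hq.elim (fun q hq => hR₂ t ht q hq)) ⟨b, rfl⟩
    have hc₂ : c₂ = b := by injection e2
    subst e1; subst e3; subst hc₂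
    refine ⟨L₂ ++ div (pr c₂) (pr a) :: L₁, c, R₁ ++ R₂, by simp [hΓ'], ?_, ?_, ?_⟩
    · intro t ht q
      rcases List.mem_append.1 ht with h' | h'
      · exact hL₂ t h' q
      · rcases List.mem_cons.1 h' with rfl | h''
        · simp
        · exact hL₁ t h'' q
    · intro t ht q
      rcases List.mem_append.1 ht with h' | h'
      · exact hR₁ t h' q
      · exact hR₂ t h' q
    · exact Red'.compL hred2 hred1
  | @bslash Γ' Δ Θ α β γ d1 d2 ih1 ih2 =>
    intro p hp hdeg
    subst hp
    have hdiv : deg2 (bsl α β) ≤ 1 := hdeg _ (by simp)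
    have hβ0 : deg2 β = 0 := by simp [deg2] at hdiv; omega
    have hα0 : deg2 α = 0 := by simp [deg2] at hdiv; omega
    obtain ⟨b, rfl⟩ := deg_zero hβ0
    obtain ⟨a, rfl⟩ := deg_zero hα0
    obtain ⟨L₁, c, R₁, hΓ', hL₁, hR₁, hred1⟩ := ih1 a rfl
      (fun t ht => hdeg t (by simp [ht]))
    obtain ⟨L₂, c₂, R₂, hΓ₂, hL₂, hR₂, hred2⟩ := ih2 p rfl
      (by
        intro t ht
        rcases List.mem_append.1 ht with h' | h'
        · exact hdeg t (by simp [h'])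
        · rcases List.mem_cons.1 h' with rfl | h''
          · simp [deg2]
          · exact hdeg t (by simp [h'']))
    obtain ⟨e1, e2, e3⟩ := listAlign (fun t => ∃ q, t = pr q) L₂ Δ (pr c₂) (pr b) R₂ Θ hΓ₂.symm
      (fun t ht hq => hq.elim (fun q hq => hL₂ t ht q hq))
      (fun t ht hq => hq.elim (fun q hq => hR₂ t ht q hq)) ⟨b, rfl⟩
    have hc₂ : c₂ = b := by injection e2
    subst e1; subst e3; subst hc₂
    refine ⟨L₂ ++ L₁, c, R₁ ++ bsl (pr a) (pr c₂) :: R₂, by simp [hΓ'], ?_, ?_, ?_⟩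
    · intro t ht q
      rcases List.mem_append.1 ht with h' | h'
      · exact hL₂ t h' q
      · exact hL₁ t h' q
    · intro t ht q
      rcases List.mem_append.1 ht with h' | h'
      · exact hR₁ t h' q
      · rcases List.mem_cons.1 h' with rfl | h''
        · simp
        · exact hR₂ t h'' q
    · exact Red'.compR hred2 hred1

end Core

section Bridge
variable {P V : Type}

/-- The linear grammar extracted from a Lambek grammar. -/
def mkLin (G : LGrammar2 P V) : LinGrammar P V where
  S := G.S
  rule_r := fun b a c => div (pr b) (pr c) ∈ G.f a
  rule_l := fun b c a => bsl (pr c) (pr b) ∈ G.f a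
  term := fun b a => pr b ∈ G.f a

theorem forall₂_mem_right {r : V → Tp2 P → Prop} {w : List V} {Γ : List (Tp2 P)}
    (h : List.Forall₂ r w Γ) : ∀ t ∈ Γ, ∃ a ∈ w, r a t := by
  induction h with
  | nil => simp
  | cons h1 h2 ih =>
    intro t ht
    rcases List.mem_cons.1 ht with rfl | ht'
    · exact ⟨_, List.mem_cons_self, h1⟩
    · obtain ⟨a, ha, hr⟩ := ih t ht'
      exact ⟨a, List.mem_cons_of_mem _ ha, hr⟩

theorem forall₂_split {r : V → Tp2 P → Prop} (l₁ : List (Tp2 P)) :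
    ∀ {w : List V} {l₂ : List (Tp2 P)}, List.Forall₂ r w (l₁ ++ l₂) →
      ∃ w₁ w₂, w = w₁ ++ w₂ ∧ List.Forall₂ r w₁ l₁ ∧ List.Forall₂ r w₂ l₂ := by
  induction l₁ with
  | nil => intro w l₂ h; exact ⟨[], w, rfl, List.Forall₂.nil, h⟩
  | cons t l₁ ih =>
    intro w l₂ h
    cases h with
    | cons h1 h2 =>
      obtain ⟨w₁, w₂, rfl, hA, hB⟩ := ih h2
      exact ⟨_ :: w₁, w₂, rfl, List.Forall₂.cons h1 hA, hB⟩

theorem red_to_lin (G : LGrammar2 P V) {L : List (Tp2 P)} {c : P} {R : List (Tp2 P)} {p : P}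
    (h : Red' L c R p) : ∀ w : List V,
      List.Forall₂ (fun a α => α ∈ G.f a) w (L ++ pr c :: R) → LinGen (mkLin G) p w := by
  induction h with
  | base c =>
    intro w hw
    simp only [List.nil_append] at hw
    cases hw with
    | cons h1 h2 =>
      cases h2
      exact LinGen.term h1
  | @left L c R p p' hred ih =>
    intro w hw
    simp only [List.cons_append] at hw
    cases hw with
    | cons h1 h2 =>
      exact LinGen.right h1 (ih _ h2)
  | @right L c R p p' hred ih =>
    intro w hw
    have hw' : List.Forall₂ (fun a α => α ∈ G.f a) w ((L ++ pr c :: R) ++ [bsl (pr p') (pr p)]) := by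
      simpa [List.append_assoc] using hw
    obtain ⟨w₁, w₂, rfl, hA, hB⟩ := forall₂_split _ hw'
    cases hB with
    | cons h1 h2 =>
      cases h2
      exact LinGen.left (B := p') h1 (ih _ hA)

theorem lin_to_der (G : LGrammar2 P V) {p : P} {w : List V}
    (h : LinGen (mkLin G) p w) :
    ∃ Γ : List (Tp2 P), List.Forall₂ (fun a α => α ∈ G.f a) w Γ ∧ Der2 Γ (pr p) := by
  induction h with
  | @term A a ha => exact ⟨[pr A], List.Forall₂.cons ha List.Forall₂.nil, Der2.ax _⟩
  | @right A B a w hr _ ih =>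
    obtain ⟨Γ, hF, hD⟩ := ih
    refine ⟨div (pr A) (pr B) :: Γ, List.Forall₂.cons hr hF, ?_⟩
    have := Der2.slash (Δ := []) (Θ := []) hD (Der2.ax (pr A))
    simpa using this
  | @left A B a w hl _ ih =>
    obtain ⟨Γ, hF, hD⟩ := ih
    refine ⟨Γ ++ [bsl (pr B) (pr A)], ?_, ?_⟩
    · exact List.rel_append hF (List.Forall₂.cons hl List.Forall₂.nil)
    · have := Der2.bslash (Δ := []) (Θ := []) hD (Der2.ax (pr A))
      simpa using this

theorem lang_eq (G : LGrammar2 P V) (hdeg : ∀ a : V, ∀ α ∈ G.f a, deg2 α ≤ 1) :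
    G.Lang = (mkLin G).Lang := by
  ext w
  constructor
  · rintro ⟨Γ, hF, hD⟩
    have hcf := der_to_cf hD
    have hdegΓ : ∀ t ∈ Γ, deg2 t ≤ 1 := by
      intro t ht
      obtain ⟨a, _, hr⟩ := forall₂_mem_right hF t ht
      exact hdeg a t hr
    obtain ⟨L, c, R, rfl, _, _, hred⟩ := structure_lemma hcf G.S rfl hdegΓ
    exact red_to_lin G hred w hF
  · intro h
    obtain ⟨Γ, hF, hD⟩ := lin_to_der G h
    exact ⟨Γ, hF, hD⟩

end Bridge
section Final
variable {N V : Type}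

/-- The Lambek grammar extracted from a linear grammar. -/
def mkLam [Finite N] (G' : LinGrammar N V) : LGrammar2 N V where
  S := G'.S
  f := fun a => {α | (∃ b c, α = div (pr b) (pr c) ∧ G'.rule_r b a c) ∨
                    (∃ b c, α = bsl (pr c) (pr b) ∧ G'.rule_l b c a) ∨
                    (∃ b, α = pr b ∧ G'.term b a)}
  fin := by
    intro a
    have : Finite (N ⊕ (N × N) ⊕ (N × N)) := by infer_instance
    apply Set.Finite.subset (Set.finite_range
      (fun x : N ⊕ (N × N) ⊕ (N × N) => match x with
        | Sum.inl b => pr b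
        | Sum.inr (Sum.inl (b, c)) => div (pr b) (pr c)
        | Sum.inr (Sum.inr (b, c)) => bsl (pr c) (pr b)))
    rintro α (⟨b, c, rfl, -⟩ | ⟨b, c, rfl, -⟩ | ⟨b, rfl, -⟩)
    · exact ⟨Sum.inr (Sum.inl (b, c)), rfl⟩
    · exact ⟨Sum.inr (Sum.inr (b, c)), rfl⟩
    · exact ⟨Sum.inl b, rfl⟩

theorem mkLam_deg [Finite N] (G' : LinGrammar N V) :
    ∀ a : V, ∀ α ∈ (mkLam G').f a, deg2 α ≤ 1 := by
  rintro a α (⟨b, c, rfl, -⟩ | ⟨b, c, rfl, -⟩ | ⟨b, rfl, -⟩) <;> simp [deg2]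

theorem mkLin_mkLam [Finite N] (G' : LinGrammar N V) : mkLin (mkLam G') = G' := by
  obtain ⟨S, rr, rl, tm⟩ := G'
  simp only [mkLin, mkLam, LinGrammar.mk.injEq]
  refine ⟨trivial, ?_, ?_, ?_⟩
  · funext b a c
    apply propext
    constructor
    · rintro (⟨b', c', heq, hr⟩ | ⟨b', c', heq, -⟩ | ⟨b', heq, -⟩)
      · obtain ⟨h1, h2⟩ : pr b = pr b' ∧ pr c = pr c' := by
          constructor <;> injection heq
        obtain rfl : b = b' := by injection h1
        obtain rfl : c = c' := by injection h2
        exact hr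
      · exact absurd heq (by simp)
      · exact absurd heq (by simp)
    · intro hr
      exact Or.inl ⟨b, c, rfl, hr⟩
  · funext b c a
    apply propext
    constructor
    · rintro (⟨b', c', heq, -⟩ | ⟨b', c', heq, hr⟩ | ⟨b', heq, -⟩)
      · exact absurd heq (by simp)
      · obtain ⟨h1, h2⟩ : pr c = pr c' ∧ pr b = pr b' := by
          constructor <;> injection heq
        obtain rfl : b = b' := by injection h2
        obtain rfl : c = c' := by injection h1
        exact hr
      · exact absurd heq (by simp)
    · intro hr
      exact Or.inr (Or.inl ⟨b, c, rfl, hr⟩)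
  · funext b a
    apply propext
    constructor
    · rintro (⟨b', c', heq, -⟩ | ⟨b', c', heq, -⟩ | ⟨b', heq, hr⟩)
      · exact absurd heq (by simp)
      · exact absurd heq (by simp)
      · obtain rfl : b = b' := by injection heq
        exact hr
    · intro hr
      exact Or.inr (Or.inr ⟨b, rfl, hr⟩)

end Final

/-- L(/→, \→)-grammars with types of degree ≤ 1 recognise exactly the ε-free linear
context-free languages. -/
theorem degree_one_lambek_eq_linear {V : Type} [Finite V] (L : Set (List V)) :
    (∃ (P : Type) (_ : Finite P) (G : LGrammar2 P V),
        (∀ a : V, ∀ α ∈ G.f a, deg2 α ≤ 1) ∧ G.Lang = L) ↔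
    (∃ (N : Type) (_ : Finite N) (G' : LinGrammar N V), G'.Lang = L) := by
  constructor
  · rintro ⟨P, hP, G, hdeg, rfl⟩
    exact ⟨P, hP, mkLin G, (lang_eq G hdeg).symm⟩
  · rintro ⟨N, hN, G', rfl⟩
    refine ⟨N, hN, mkLam G', mkLam_deg G', ?_⟩
    rw [lang_eq (mkLam G') (mkLam_deg G'), mkLin_mkLam]
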